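/- Let C be a regular, irreducible curve that is projective over a field k, with function field F = k(C), arithmetic genus t ≥ 1, and a k-rational point O, and let S = { P in C : RR_{3t}((P)) ≠ {0} }. Suppose the closed point P is not in S, that d = deg(P) satisfies 2t + 1 ≤ d ≤ 3t, that a_1^+ and a_2^+ are nonzero elements of RR_{2t−1}, and that a_1^− is a nonzero element of RR_{3t}. Then there exist nonzero b^+, b^− in RR_{3t} and g in RR_{3t} satisfying a_1^− b^+ − a_1^+ a_2^+ b^− − f_P f_P' g = 0; in particular, {f_P, a_1^+} + {f_P, a_2^+} − {f_P, a_1^−} ≡ {f_P, b^+} − {f_P, b^−} modulo L_{3t} in K₂(F). -/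

import Mathlib

open scoped TensorProduct

noncomputable section

/-- The set of Steinberg relations in `Fˣ ⊗_ℤ Fˣ` (written additively):
the elements `a ⊗ b` with `a + b = 1` in `F`. -/
def SteinbergSet (F : Type*) [Field F] :
    Set (TensorProduct ℤ (Additive Fˣ) (Additive Fˣ)) :=
  { x | ∃ a b : Fˣ, (a : F) + (b : F) = 1 ∧
      x = Additive.ofMul a ⊗ₜ[ℤ] Additive.ofMul b }

/-- Milnor's `K₂` of a field, via Matsumoto's presentation. -/
abbrev K2 (F : Type*) [Field F] :=
  (TensorProduct ℤ (Additive Fˣ) (Additive Fˣ)) ⧸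
    Submodule.span ℤ (SteinbergSet F)

/-- The symbol `{f, g}` in `K₂(F)`. -/
def symbol {F : Type*} [Field F] (f g : Fˣ) : K2 F :=
  Submodule.Quotient.mk (Additive.ofMul f ⊗ₜ[ℤ] Additive.ofMul g)

/-- The degree of a divisor `D` on the curve: `∑_P deg(P) · D(P)`,
where `deg P = [k(P) : k]`. -/
def divDeg (k : Type*) [Field k] {Pt : Type*} (res : Pt → Type*)
    [∀ P, Field (res P)] [∀ P, Algebra k (res P)] (D : Pt →₀ ℤ) : ℤ :=
  ∑ᶠ P, (Module.finrank k (res P) : ℤ) * D P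

/-- Axioms for a regular, irreducible curve `C`, projective over a field `k`, with
`H⁰(C, O_C) = k`, presented through: its function field `F = k(C)`, its set `Pt` of
closed points, the residue fields `res P = k(P)`, the normalized valuations `ord P`,
the evaluation maps `ev P` (evaluation at `P` of functions regular at `P`), the
Riemann-Roch spaces `L D = H⁰(C, O_C(D))`, and the arithmetic genus
`t = dim_k H¹(C, O_C)`, characterized by the Riemann-Roch relations. -/
structure IsProjCurve (k F : Type*) [Field k] [Field F] [Algebra k F]
    {Pt : Type*} (res : Pt → Type*) [∀ P, Field (res P)] [∀ P, Algebra k (res P)]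
    (ord : Pt → F → ℤ) (ev : ∀ P, F → res P)
    (L : (Pt →₀ ℤ) → Submodule k F) (t : ℕ) : Prop where
  finiteDimensional_res : ∀ P, FiniteDimensional k (res P)
  ord_mul : ∀ P (f g : F), f ≠ 0 → g ≠ 0 → ord P (f * g) = ord P f + ord P g
  ord_add : ∀ P (f g : F), f ≠ 0 → g ≠ 0 → f + g ≠ 0 →
      min (ord P f) (ord P g) ≤ ord P (f + g)
  ord_algebraMap : ∀ P (c : k), c ≠ 0 → ord P (algebraMap k F c) = 0
  ord_uniformizer : ∀ P, ∃ f : F, f ≠ 0 ∧ ord P f = 1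
  ord_separates : ∀ P Q, (∀ f : F, ord P f = ord Q f) → P = Q
  support_finite : ∀ f : F, f ≠ 0 → {P | ord P f ≠ 0}.Finite
  degree_formula : ∀ f : F, f ≠ 0 →
      ∑ᶠ P, (Module.finrank k (res P) : ℤ) * ord P f = 0
  ev_zero : ∀ P, ev P 0 = 0
  ev_one : ∀ P, ev P 1 = 1
  ev_add : ∀ P (f g : F), f ≠ 0 → g ≠ 0 → 0 ≤ ord P f → 0 ≤ ord P g →
      ev P (f + g) = ev P f + ev P g
  ev_mul : ∀ P (f g : F), f ≠ 0 → g ≠ 0 → 0 ≤ ord P f → 0 ≤ ord P g →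
      ev P (f * g) = ev P f * ev P g
  ev_algebraMap : ∀ P (c : k), ev P (algebraMap k F c) = algebraMap k (res P) c
  ev_eq_zero_iff : ∀ P (f : F), f ≠ 0 → 0 ≤ ord P f → (ev P f = 0 ↔ 0 < ord P f)
  ev_surjective : ∀ P (y : res P), ∃ f : F, f ≠ 0 ∧ 0 ≤ ord P f ∧ ev P f = y
  mem_L : ∀ (D : Pt →₀ ℤ) (f : F), f ∈ L D ↔ (f ≠ 0 → ∀ P, 0 ≤ D P + ord P f)
  finiteDimensional_L : ∀ D, FiniteDimensional k (L D)
  global_sections : ∀ f : F, f ∈ L 0 ↔ ∃ c : k, algebraMap k F c = f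
  rr_ineq : ∀ D : Pt →₀ ℤ,
      divDeg k res D + 1 - t ≤ (Module.finrank k (L D) : ℤ)
  rr_eq : ∀ D : Pt →₀ ℤ, 2 * (t : ℤ) - 2 < divDeg k res D →
      (Module.finrank k (L D) : ℤ) = divDeg k res D + 1 - t

/-- `T` is the tame symbol `K₂(F) → ∐_{P} k(P)^*`: it is determined by
`T_P({f,g}) = (-1)^{ord_P(f)·ord_P(g)} (f^{ord_P(g)} / g^{ord_P(f)})(P)`. -/
def IsTameSymbol {F : Type*} [Field F] {Pt : Type*} {res : Pt → Type*}
    [∀ P, Field (res P)]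
    (ord : Pt → F → ℤ) (ev : ∀ P, F → res P)
    (T : K2 F →+ Π₀ P : Pt, Additive ((res P)ˣ)) : Prop :=
  ∀ (f g : Fˣ) (P : Pt),
    ((Additive.toMul (T (symbol f g) P) : (res P)ˣ) : res P) =
      ev P (((-1 : Fˣ) ^ (ord P (f : F) * ord P (g : F)) *
        f ^ (ord P (g : F)) * g ^ (-ord P (f : F)) : Fˣ) : F)

/-- `L_d`: the subgroup of `K₂(F)` generated by the symbols `{l, m}` with `l, m`
nonzero elements of the Riemann-Roch space `H⁰(C, O_C(d(O)))`. -/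
def Lsub {k F : Type*} [Field k] [Field F] [Algebra k F] {Pt : Type*}
    (L : (Pt →₀ ℤ) → Submodule k F) (O : Pt) (d : ℤ) : AddSubgroup (K2 F) :=
  AddSubgroup.closure
    { x | ∃ l m : Fˣ, (l : F) ∈ L (Finsupp.single O d) ∧
        (m : F) ∈ L (Finsupp.single O d) ∧ x = symbol l m }

section Aux

lemma symbol_mul_right {F : Type*} [Field F] (f g h : Fˣ) :
    symbol f (g * h) = symbol f g + symbol f h := by
  unfold symbol
  rw [ofMul_mul, TensorProduct.tmul_add, Submodule.Quotient.mk_add]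

lemma symbol_mul_left {F : Type*} [Field F] (f g h : Fˣ) :
    symbol (f * g) h = symbol f h + symbol g h := by
  unfold symbol
  rw [ofMul_mul, TensorProduct.add_tmul, Submodule.Quotient.mk_add]

lemma symbol_inv_right {F : Type*} [Field F] (f g : Fˣ) :
    symbol f g⁻¹ = - symbol f g := by
  unfold symbol
  rw [ofMul_inv, TensorProduct.tmul_neg, Submodule.Quotient.mk_neg]

lemma symbol_inv_left {F : Type*} [Field F] (f g : Fˣ) :
    symbol f⁻¹ g = - symbol f g := by
  unfold symbol
  rw [ofMul_inv, TensorProduct.neg_tmul, Submodule.Quotient.mk_neg]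

lemma symbol_steinberg {F : Type*} [Field F] (a b : Fˣ) (h : (a : F) + (b : F) = 1) :
    symbol a b = 0 := by
  unfold symbol
  rw [Submodule.Quotient.mk_eq_zero]
  exact Submodule.subset_span ⟨a, b, h, rfl⟩

lemma divDeg_single (k : Type*) [Field k] {Pt : Type*} (res : Pt → Type*)
    [∀ P, Field (res P)] [∀ P, Algebra k (res P)] (O : Pt) (n : ℤ) :
    divDeg k res (Finsupp.single O n) = (Module.finrank k (res O) : ℤ) * n := by
  unfold divDeg
  rw [finsum_eq_single _ O (fun Q hQ => by
    rw [Finsupp.single_eq_of_ne' (Ne.symm hQ), mul_zero])]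
  rw [Finsupp.single_eq_same]

end Aux

/-- Lemma `3t3t3tlemma`.  Let `C` be a regular, irreducible curve,
projective over `k`, with function field `F`, arithmetic genus `t ≥ 1` and a
`k`-rational point `O`; let `S = {P : RR_{3t}((P)) ≠ 0}`.  Suppose `P ∉ S`,
`2t + 1 ≤ d = deg(P) ≤ 3t`, `a₁⁺, a₂⁺` are nonzero elements of `RR_{2t-1}` and `a₁⁻`
is a nonzero element of `RR_{3t}`.  Then there are nonzero `b⁺, b⁻` in `RR_{3t}` and
`g ∈ RR_{3t}` with `a₁⁻ b⁺ - a₁⁺ a₂⁺ b⁻ - f_P f_P' g = 0`; in particular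
`{f_P, a₁⁺} + {f_P, a₂⁺} - {f_P, a₁⁻} ≡ {f_P, b⁺} - {f_P, b⁻}` modulo `L_{3t}`. -/
theorem statement18 (k F : Type*) [Field k] [Field F] [Algebra k F]
    {Pt : Type*} (res : Pt → Type*) [∀ P, Field (res P)] [∀ P, Algebra k (res P)]
    (ord : Pt → F → ℤ) (ev : ∀ P, F → res P)
    (L : (Pt →₀ ℤ) → Submodule k F) (t : ℕ) (ht : 1 ≤ t)
    (hC : IsProjCurve k F res ord ev L t)
    (O : Pt) (hO : Module.finrank k (res O) = 1)
    (P : Pt)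
    (hPS : L (Finsupp.single O (3 * t : ℤ) - Finsupp.single P 1) = ⊥)
    (d : ℕ) (hd : d = Module.finrank k (res P))
    (hd1 : 2 * t + 1 ≤ d) (hd2 : d ≤ 3 * t)
    (fP : Fˣ) (DP : Pt →₀ ℤ)
    (hDPeff : ∀ Q, 0 ≤ DP Q) (hDPdeg : divDeg k res DP = t)
    (hfP : ∀ Q, ord Q (fP : F) =
      ((Finsupp.single P 1 - DP - ((d : ℤ) - t) • Finsupp.single O 1 : Pt →₀ ℤ)) Q)
    (fP' : Fˣ) (DP' : Pt →₀ ℤ)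
    (hDP'eff : ∀ Q, 0 ≤ DP' Q) (hDP'deg : divDeg k res DP' = t)
    (hfP' : ∀ Q, ord Q (fP' : F) =
      ((DP + DP' - (2 * (t : ℤ)) • Finsupp.single O 1 : Pt →₀ ℤ)) Q)
    (a1p a2p a1m : Fˣ)
    (ha1p : (a1p : F) ∈ L (Finsupp.single O (2 * (t : ℤ) - 1)))
    (ha2p : (a2p : F) ∈ L (Finsupp.single O (2 * (t : ℤ) - 1)))
    (ha1m : (a1m : F) ∈ L (Finsupp.single O (3 * t : ℤ))) :
    ∃ bp bm : Fˣ,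
      (bp : F) ∈ L (Finsupp.single O (3 * t : ℤ)) ∧
      (bm : F) ∈ L (Finsupp.single O (3 * t : ℤ)) ∧
      ∃ g ∈ L (Finsupp.single O (3 * t : ℤ)),
        (a1m : F) * bp - (a1p : F) * a2p * bm - (fP : F) * fP' * g = 0 ∧
        symbol fP a1p + symbol fP a2p - symbol fP a1m -
          (symbol fP bp - symbol fP bm) ∈ Lsub L O (3 * t : ℤ) := by

  classical
  haveI instL := hC.finiteDimensional_L
  have htz : (1:ℤ) ≤ (t:ℤ) := by exact_mod_cast ht
  have hdz1 : 2*(t:ℤ)+1 ≤ (d:ℤ) := by exact_mod_cast hd1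
  have hdz2 : (d:ℤ) ≤ 3*(t:ℤ) := by exact_mod_cast hd2
  have hPO : P ≠ O := by
    intro h
    rw [h, hO] at hd
    omega
  have hOP : O ≠ P := Ne.symm hPO
  -- monotonicity and multiplicativity of Riemann-Roch spaces
  have Lmono : ∀ D D' : Pt →₀ ℤ, (∀ Q, D Q ≤ D' Q) → L D ≤ L D' := by
    intro D D' h f hf
    rw [hC.mem_L] at hf ⊢
    intro h0 Q
    have h1 := hf h0 Q
    have h2 := h Q
    omega
  have Lmul : ∀ (D D' : Pt →₀ ℤ) (f g : F), f ∈ L D → g ∈ L D' → f*g ∈ L (D+D') := by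
    intro D D' f g hf hg
    rw [hC.mem_L] at hf hg ⊢
    intro h0 Q
    have hfne : f ≠ 0 := left_ne_zero_of_mul h0
    have hgne : g ≠ 0 := right_ne_zero_of_mul h0
    rw [hC.ord_mul Q f g hfne hgne]
    have h1 := hf hfne Q
    have h2 := hg hgne Q
    simp only [Finsupp.add_apply]
    omega
  -- memberships in RR_{3t}
  have ha1p3 : (a1p : F) ∈ L (Finsupp.single O (3 * t : ℤ)) := by
    refine Lmono _ _ ?_ ha1p
    intro Q
    simp only [Finsupp.single_apply]
    split <;> omega
  have ha2p3 : (a2p : F) ∈ L (Finsupp.single O (3 * t : ℤ)) := by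
    refine Lmono _ _ ?_ ha2p
    intro Q
    simp only [Finsupp.single_apply]
    split <;> omega
  have hfP'3 : (fP' : F) ∈ L (Finsupp.single O (3 * t : ℤ)) := by
    rw [hC.mem_L]
    intro _ Q
    rw [hfP' Q]
    have h1 := hDPeff Q
    have h2 := hDP'eff Q
    simp only [Finsupp.coe_sub, Finsupp.coe_add, Pi.sub_apply, Pi.add_apply,
      Finsupp.smul_apply, smul_eq_mul, Finsupp.single_apply]
    split_ifs <;> omega
  have hc3mem : (fP : F) * (fP' : F) ∈ L (Finsupp.single O ((d : ℤ) + (t : ℤ))) := by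
    rw [hC.mem_L]
    intro _ Q
    rw [hC.ord_mul Q _ _ fP.ne_zero fP'.ne_zero, hfP Q, hfP' Q]
    have h1 := hDPeff Q
    have h2 := hDP'eff Q
    simp only [Finsupp.coe_sub, Finsupp.coe_add, Pi.sub_apply, Pi.add_apply,
      Finsupp.smul_apply, smul_eq_mul, Finsupp.single_apply]
    split_ifs <;> omega
  -- nonzero elements of RR_{3t} do not vanish at P
  have hLP0 : ∀ f : F, f ∈ L (Finsupp.single O (3 * t : ℤ)) → f ≠ 0 → ord P f = 0 := by
    intro f hf hf0
    have hQ := (hC.mem_L _ f).mp hf hf0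
    have h1 : 0 ≤ ord P f := by
      have := hQ P
      simpa [Finsupp.single_eq_of_ne' hOP] using this
    by_contra hne
    have hpos : 1 ≤ ord P f := by omega
    have hmem : f ∈ L (Finsupp.single O (3 * t : ℤ) - Finsupp.single P 1) := by
      rw [hC.mem_L]
      intro _ Q
      by_cases hQP : Q = P
      · subst hQP
        simp only [Finsupp.coe_sub, Pi.sub_apply, Finsupp.single_eq_of_ne' hOP,
          Finsupp.single_eq_same]
        omega
      · have := hQ Q
        simp only [Finsupp.coe_sub, Pi.sub_apply, Finsupp.single_eq_of_ne' (Ne.symm hQP)]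
        omega
    rw [hPS] at hmem
    exact hf0 (by simpa using hmem)
  have horda1p : ord P (a1p : F) = 0 := hLP0 _ ha1p3 a1p.ne_zero
  have horda2p : ord P (a2p : F) = 0 := hLP0 _ ha2p3 a2p.ne_zero
  have horda1m : ord P (a1m : F) = 0 := hLP0 _ ha1m a1m.ne_zero
  have hordc3 : ord P ((fP : F) * (fP' : F)) = 1 + DP' P := by
    rw [hC.ord_mul P _ _ fP.ne_zero fP'.ne_zero, hfP P, hfP' P]
    simp only [Finsupp.coe_sub, Finsupp.coe_add, Pi.sub_apply, Pi.add_apply,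
      Finsupp.smul_apply, smul_eq_mul, Finsupp.single_eq_same,
      Finsupp.single_eq_of_ne' hOP]
    ring
  have hordneg : ∀ (Q : Pt) (f : F), f ≠ 0 → ord Q (-f) = ord Q f := by
    intro Q f hf
    have h1 : ((-1 : F)) = algebraMap k F (-1) := by simp
    have h2 : ord Q (-1 : F) = 0 := by
      rw [h1]
      exact hC.ord_algebraMap Q (-1) (by norm_num)
    calc ord Q (-f) = ord Q ((-1) * f) := by rw [neg_one_mul]
    _ = ord Q (-1 : F) + ord Q f := hC.ord_mul Q _ _ (by norm_num) hf
    _ = ord Q f := by rw [h2, zero_add]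
  -- the linear map and its kernel
  set M : Submodule k F := L (Finsupp.single O (3 * t : ℤ)) with hM
  set ψ : (M × M × M) →ₗ[k] F :=
    (LinearMap.mulLeft k ((a1m : F))).comp (M.subtype.comp (LinearMap.fst k M (M × M)))
    - (LinearMap.mulLeft k ((a1p : F) * (a2p : F))).comp
        (M.subtype.comp ((LinearMap.fst k M M).comp (LinearMap.snd k M (M × M))))
    - (LinearMap.mulLeft k ((fP : F) * (fP' : F))).comp
        (M.subtype.comp ((LinearMap.snd k M M).comp (LinearMap.snd k M (M × M)))) with hψdef
  have hψ : ∀ x : M × M × M, ψ x =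
      (a1m : F) * (x.1 : F) - (a1p : F) * (a2p : F) * (x.2.1 : F)
        - (fP : F) * (fP' : F) * (x.2.2 : F) := fun x => rfl
  have hψmem : ∀ x : M × M × M, ψ x ∈ L (Finsupp.single O (7 * t : ℤ)) := by
    intro x
    rw [hψ]
    have h1 : (a1m : F) * (x.1 : F) ∈ L (Finsupp.single O (7 * t : ℤ)) := by
      refine Lmono _ _ ?_ (Lmul _ _ _ _ ha1m x.1.2)
      intro Q
      simp only [Finsupp.add_apply, Finsupp.single_apply]
      split <;> omega
    have h2 : (a1p : F) * (a2p : F) * (x.2.1 : F) ∈ L (Finsupp.single O (7 * t : ℤ)) := by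
      refine Lmono _ _ ?_ (Lmul _ _ _ _ (Lmul _ _ _ _ ha1p ha2p) x.2.1.2)
      intro Q
      simp only [Finsupp.add_apply, Finsupp.single_apply]
      split <;> omega
    have h3 : (fP : F) * (fP' : F) * (x.2.2 : F) ∈ L (Finsupp.single O (7 * t : ℤ)) := by
      refine Lmono _ _ ?_ (Lmul _ _ _ _ hc3mem x.2.2.2)
      intro Q
      simp only [Finsupp.add_apply, Finsupp.single_apply]
      split <;> omega
    exact Submodule.sub_mem _ (Submodule.sub_mem _ h1 h2) h3
  set φ : (M × M × M) →ₗ[k] L (Finsupp.single O (7 * t : ℤ)) :=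
    ψ.codRestrict _ hψmem with hφdef
  have hr3 : (Module.finrank k M : ℤ) = 2*(t:ℤ)+1 := by
    have h := hC.rr_eq (Finsupp.single O (3 * t : ℤ)) (by
      rw [divDeg_single k res O, hO]
      push_cast
      omega)
    rw [divDeg_single k res O, hO] at h
    rw [← hM] at h
    push_cast at h ⊢
    omega
  have hr7 : (Module.finrank k (L (Finsupp.single O (7 * t : ℤ))) : ℤ) = 6*(t:ℤ)+1 := by
    have h := hC.rr_eq (Finsupp.single O (7 * t : ℤ)) (by
      rw [divDeg_single k res O, hO]
      push_cast
      omega)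
    rw [divDeg_single k res O, hO] at h
    push_cast at h ⊢
    omega
  have hninj : ¬ Function.Injective φ := by
    intro hinj
    have hle := LinearMap.finrank_le_finrank_of_injective hinj
    rw [Module.finrank_prod, Module.finrank_prod] at hle
    omega
  have hker : LinearMap.ker φ ≠ ⊥ := fun h => hninj (LinearMap.ker_eq_bot.mp h)
  obtain ⟨x, hxk, hx0⟩ := (Submodule.ne_bot_iff _).mp hker
  have hxk' : ψ x = 0 := by
    have h := congrArg (Subtype.val) (LinearMap.mem_ker.mp hxk)
    simpa [hφdef] using h
  set b1 : F := (x.1 : F) with hb1def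
  set b2 : F := (x.2.1 : F) with hb2def
  set b3 : F := (x.2.2 : F) with hb3def
  have hrel : (a1m : F) * b1 - (a1p : F) * (a2p : F) * b2 - (fP : F) * (fP' : F) * b3 = 0 := by
    rw [hψ] at hxk'
    exact hxk'
  have hb1m : b1 ∈ L (Finsupp.single O (3 * t : ℤ)) := x.1.2
  have hb2m : b2 ∈ L (Finsupp.single O (3 * t : ℤ)) := x.2.1.2
  have hb3m : b3 ∈ L (Finsupp.single O (3 * t : ℤ)) := x.2.2.2
  have hx0' : ¬ (b1 = 0 ∧ b2 = 0 ∧ b3 = 0) := by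
    rintro ⟨h1, h2, h3⟩
    exact hx0 (Prod.ext (Subtype.ext h1) (Prod.ext (Subtype.ext h2) (Subtype.ext h3)))
  have hb3ord : b3 ≠ 0 → 0 ≤ ord P b3 := by
    intro h
    have := (hC.mem_L _ b3).mp hb3m h P
    simpa [Finsupp.single_eq_of_ne' hOP] using this
  have hDP'P := hDP'eff P
  -- b1 ≠ 0
  have hb1ne : b1 ≠ 0 := by
    intro h0
    have hb2ne : b2 ≠ 0 := by
      intro h2
      have h3' : (fP : F) * (fP' : F) * b3 = 0 := by
        linear_combination -hrel + (a1m : F) * h0 - (a1p : F) * (a2p : F) * h2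
      have hb3 : b3 = 0 := by
        rcases mul_eq_zero.mp h3' with h | h
        · exact absurd h (mul_ne_zero fP.ne_zero fP'.ne_zero)
        · exact h
      exact hx0' ⟨h0, h2, hb3⟩
    have hb3ne : b3 ≠ 0 := by
      intro h3
      have h2' : (a1p : F) * (a2p : F) * b2 = 0 := by
        linear_combination -hrel + (a1m : F) * h0 - (fP : F) * (fP' : F) * h3
      rcases mul_eq_zero.mp h2' with h | h
      · exact absurd h (mul_ne_zero a1p.ne_zero a2p.ne_zero)
      · exact hb2ne h
    have heq : (fP : F) * (fP' : F) * b3 = -((a1p : F) * (a2p : F) * b2) := by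
      linear_combination -hrel + (a1m : F) * h0
    have hord := congrArg (ord P) heq
    rw [hC.ord_mul P _ _ (mul_ne_zero fP.ne_zero fP'.ne_zero) hb3ne, hordc3,
      hordneg P _ (mul_ne_zero (mul_ne_zero a1p.ne_zero a2p.ne_zero) hb2ne),
      hC.ord_mul P _ _ (mul_ne_zero a1p.ne_zero a2p.ne_zero) hb2ne,
      hC.ord_mul P _ _ a1p.ne_zero a2p.ne_zero, horda1p, horda2p,
      hLP0 b2 hb2m hb2ne] at hord
    have := hb3ord hb3ne
    omega
  -- b2 ≠ 0
  have hb2ne : b2 ≠ 0 := by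
    intro h0
    have hb3ne : b3 ≠ 0 := by
      intro h3
      have h1' : (a1m : F) * b1 = 0 := by
        linear_combination hrel + (a1p : F) * (a2p : F) * h0 + (fP : F) * (fP' : F) * h3
      rcases mul_eq_zero.mp h1' with h | h
      · exact a1m.ne_zero h
      · exact hb1ne h
    have heq : (a1m : F) * b1 = (fP : F) * (fP' : F) * b3 := by
      linear_combination hrel + (a1p : F) * (a2p : F) * h0
    have hord := congrArg (ord P) heq
    rw [hC.ord_mul P _ _ a1m.ne_zero hb1ne, horda1m, hLP0 b1 hb1m hb1ne,
      hC.ord_mul P _ _ (mul_ne_zero fP.ne_zero fP'.ne_zero) hb3ne, hordc3] at hord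
    have := hb3ord hb3ne
    omega
  set Bp : Fˣ := Units.mk0 b1 hb1ne with hBpdef
  set Bm : Fˣ := Units.mk0 b2 hb2ne with hBmdef
  have elem : ∀ u v : Fˣ, (u : F) ∈ L (Finsupp.single O (3 * t : ℤ)) →
      (v : F) ∈ L (Finsupp.single O (3 * t : ℤ)) →
      symbol u v ∈ Lsub L O (3 * t : ℤ) :=
    fun u v hu hv => AddSubgroup.subset_closure ⟨u, v, hu, hv, rfl⟩
  refine ⟨Bp, Bm, hb1m, hb2m, b3, hb3m, hrel, ?_⟩
  by_cases hb3 : b3 = 0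
  · -- degenerate case: the combination is zero
    have hequ : a1m * Bp = a1p * a2p * Bm := by
      apply Units.ext
      simp only [Units.val_mul, hBpdef, hBmdef, Units.val_mk0]
      linear_combination hrel + (fP : F) * (fP' : F) * hb3
    have hkey : symbol fP a1m + symbol fP Bp =
        symbol fP a1p + symbol fP a2p + symbol fP Bm := by
      have h := congrArg (symbol fP) hequ
      simp only [symbol_mul_right] at h
      rw [h]
    have hz : symbol fP a1p + symbol fP a2p - symbol fP a1m -
        (symbol fP Bp - symbol fP Bm) = 0 := by
      have h2 : symbol fP a1p + symbol fP a2p - symbol fP a1m -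
          (symbol fP Bp - symbol fP Bm) =
          (symbol fP a1p + symbol fP a2p + symbol fP Bm) -
            (symbol fP a1m + symbol fP Bp) := by abel
      rw [h2, ← hkey, sub_self]
    rw [hz]
    exact zero_mem _
  · set G : Fˣ := Units.mk0 b3 hb3 with hGdef
    set u : Fˣ := a1p * a2p * Bm * (a1m * Bp)⁻¹ with hu
    set w : Fˣ := fP * fP' * G * (a1m * Bp)⁻¹ with hw
    have hne : (a1m : F) * b1 ≠ 0 := mul_ne_zero a1m.ne_zero hb1ne
    have hsum : (w : F) + (u : F) = 1 := by
      simp only [hw, hu, Units.val_mul, Units.val_inv_eq_inv_val, hBpdef, hBmdef,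
        hGdef, Units.val_mk0]
      field_simp
      linear_combination -hrel
    have hst : symbol w u = 0 := symbol_steinberg w u hsum
    have hRu : ∀ z : Fˣ, (z : F) ∈ L (Finsupp.single O (3 * t : ℤ)) →
        symbol z u ∈ Lsub L O (3 * t : ℤ) := by
      intro z hz
      rw [hu]
      simp only [symbol_mul_right, symbol_inv_right]
      exact add_mem (add_mem (add_mem (elem z a1p hz ha1p3) (elem z a2p hz ha2p3))
        (elem z Bm hz hb2m)) (neg_mem (add_mem (elem z a1m hz ha1m) (elem z Bp hz hb1m)))
    have hfPu : symbol fP u = symbol a1m u + symbol Bp u - symbol fP' u - symbol G u := by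
      have h2 : symbol fP u - (symbol a1m u + symbol Bp u - symbol fP' u - symbol G u) =
          symbol w u := by
        rw [hw]
        simp only [symbol_mul_left, symbol_inv_left]
        abel
      rw [hst] at h2
      exact sub_eq_zero.mp h2
    have hexpr : symbol fP a1p + symbol fP a2p - symbol fP a1m -
        (symbol fP Bp - symbol fP Bm) = symbol fP u := by
      rw [hu]
      simp only [symbol_mul_right, symbol_inv_right]
      abel
    rw [hexpr, hfPu]
    exact sub_mem (sub_mem (add_mem (hRu a1m ha1m) (hRu Bp hb1m)) (hRu fP' hfP'3))
      (hRu G hb3m)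

end
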